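/- Let A₁, A₂, A₃ > 0 and d₁⁰, d₂⁰, d₃⁰ > 0 be reals, define f_j(t) = (A_j/4)·(2t + sinh(2t)) and ṽ_j⁰ = (A_j/4)·(1 + cosh(2d_j⁰)) for j = 1, 2, 3, and assume ṽ₂⁰ ≥ ṽ₃⁰. Define V : ℝ → ℝ by V(d₁) = f₁(d₁) + f₂(d₂⁰ + d₁⁰ − d₁) + f₃(d₃⁰ − d₁⁰ + d₁) for d₁ ≤ d₁⁰, and V(d₁) = f₁(d₁) + f₂(d₂⁰ + d₁⁰ − d₁) + f₃(d₃⁰ + d₁⁰ − d₁) for d₁ ≥ d₁⁰. Then V has a local maximum at d₁⁰ if and only if the strict triangular inequalities ṽ₂⁰ − ṽ₃⁰ < ṽ₁⁰ < ṽ₂⁰ + ṽ₃⁰ hold. -/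

import Mathlib

set_option maxHeartbeats 1000000

open Real Set

private lemma hdF (A x : ℝ) :
    HasDerivAt (fun t => A / 4 * (2 * t + Real.sinh (2 * t)))
      (A / 2 * (1 + Real.cosh (2 * x))) x := by
  have h2t : HasDerivAt (fun t : ℝ => 2 * t) 2 x := by
    simpa using (hasDerivAt_id x).const_mul 2
  have hs : HasDerivAt (fun t : ℝ => Real.sinh (2 * t)) (Real.cosh (2 * x) * 2) x :=
    (Real.hasDerivAt_sinh (2 * x)).comp x h2t
  have := (h2t.add hs).const_mul (A / 4)
  refine this.congr_deriv ?_
  ring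

private lemma hdG (A x : ℝ) :
    HasDerivAt (fun t => A / 2 * (1 + Real.cosh (2 * t)))
      (A * Real.sinh (2 * x)) x := by
  have h2t : HasDerivAt (fun t : ℝ => 2 * t) 2 x := by
    simpa using (hasDerivAt_id x).const_mul 2
  have hc : HasDerivAt (fun t : ℝ => Real.cosh (2 * t)) (Real.sinh (2 * x) * 2) x :=
    (Real.hasDerivAt_cosh (2 * x)).comp x h2t
  have := (hc.const_add 1).const_mul (A / 2)
  refine this.congr_deriv ?_
  ring

private lemma hdBranchL (B₁ B₂ B₃ c₂ c₃ x : ℝ) :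
    HasDerivAt (fun d => B₁ / 4 * (2 * d + Real.sinh (2 * d))
        + B₂ / 4 * (2 * (c₂ - d) + Real.sinh (2 * (c₂ - d)))
        + B₃ / 4 * (2 * (c₃ + d) + Real.sinh (2 * (c₃ + d))))
      (B₁ / 2 * (1 + Real.cosh (2 * x)) - B₂ / 2 * (1 + Real.cosh (2 * (c₂ - x)))
        + B₃ / 2 * (1 + Real.cosh (2 * (c₃ + x)))) x := by
  have haff2 : HasDerivAt (fun d : ℝ => c₂ - d) (-1) x := by
    simpa using (hasDerivAt_id x).const_sub c₂
  have haff3 : HasDerivAt (fun d : ℝ => c₃ + d) 1 x := by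
    simpa using (hasDerivAt_id x).const_add c₃
  have h1 := hdF B₁ x
  have h2 := (hdF B₂ (c₂ - x)).comp x haff2
  have h3 := (hdF B₃ (c₃ + x)).comp x haff3
  have heq : B₁ / 2 * (1 + Real.cosh (2 * x)) - B₂ / 2 * (1 + Real.cosh (2 * (c₂ - x)))
      + B₃ / 2 * (1 + Real.cosh (2 * (c₃ + x)))
      = B₁ / 2 * (1 + Real.cosh (2 * x)) + B₂ / 2 * (1 + Real.cosh (2 * (c₂ - x))) * (-1)
      + B₃ / 2 * (1 + Real.cosh (2 * (c₃ + x))) * 1 := by ring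
  rw [heq]
  exact (h1.add h2).add h3

private lemma hdBranchR (B₁ B₂ B₃ c₂ c₃ x : ℝ) :
    HasDerivAt (fun d => B₁ / 4 * (2 * d + Real.sinh (2 * d))
        + B₂ / 4 * (2 * (c₂ - d) + Real.sinh (2 * (c₂ - d)))
        + B₃ / 4 * (2 * (c₃ - d) + Real.sinh (2 * (c₃ - d))))
      (B₁ / 2 * (1 + Real.cosh (2 * x)) - B₂ / 2 * (1 + Real.cosh (2 * (c₂ - x)))
        - B₃ / 2 * (1 + Real.cosh (2 * (c₃ - x)))) x := by
  have haff2 : HasDerivAt (fun d : ℝ => c₂ - d) (-1) x := by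
    simpa using (hasDerivAt_id x).const_sub c₂
  have haff3 : HasDerivAt (fun d : ℝ => c₃ - d) (-1) x := by
    simpa using (hasDerivAt_id x).const_sub c₃
  have h1 := hdF B₁ x
  have h2 := (hdF B₂ (c₂ - x)).comp x haff2
  have h3 := (hdF B₃ (c₃ - x)).comp x haff3
  have heq : B₁ / 2 * (1 + Real.cosh (2 * x)) - B₂ / 2 * (1 + Real.cosh (2 * (c₂ - x)))
      - B₃ / 2 * (1 + Real.cosh (2 * (c₃ - x)))
      = B₁ / 2 * (1 + Real.cosh (2 * x)) + B₂ / 2 * (1 + Real.cosh (2 * (c₂ - x))) * (-1)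
      + B₃ / 2 * (1 + Real.cosh (2 * (c₃ - x))) * (-1) := by ring
  rw [heq]
  exact (h1.add h2).add h3

private lemma hdLBranchL (B₁ B₂ B₃ c₂ c₃ x : ℝ) :
    HasDerivAt (fun d => B₁ / 2 * (1 + Real.cosh (2 * d))
        - B₂ / 2 * (1 + Real.cosh (2 * (c₂ - d)))
        + B₃ / 2 * (1 + Real.cosh (2 * (c₃ + d))))
      (B₁ * Real.sinh (2 * x) + B₂ * Real.sinh (2 * (c₂ - x))
        + B₃ * Real.sinh (2 * (c₃ + x))) x := by
  have haff2 : HasDerivAt (fun d : ℝ => c₂ - d) (-1) x := by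
    simpa using (hasDerivAt_id x).const_sub c₂
  have haff3 : HasDerivAt (fun d : ℝ => c₃ + d) 1 x := by
    simpa using (hasDerivAt_id x).const_add c₃
  have h1 := hdG B₁ x
  have h2 := (hdG B₂ (c₂ - x)).comp x haff2
  have h3 := (hdG B₃ (c₃ + x)).comp x haff3
  have heq : B₁ * Real.sinh (2 * x) + B₂ * Real.sinh (2 * (c₂ - x))
      + B₃ * Real.sinh (2 * (c₃ + x))
      = B₁ * Real.sinh (2 * x) - B₂ * Real.sinh (2 * (c₂ - x)) * (-1)
      + B₃ * Real.sinh (2 * (c₃ + x)) * 1 := by ring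
  rw [heq]
  exact (h1.sub h2).add h3

private lemma hdLBranchR (B₁ B₂ B₃ c₂ c₃ x : ℝ) :
    HasDerivAt (fun d => B₁ / 2 * (1 + Real.cosh (2 * d))
        - B₂ / 2 * (1 + Real.cosh (2 * (c₂ - d)))
        - B₃ / 2 * (1 + Real.cosh (2 * (c₃ - d))))
      (B₁ * Real.sinh (2 * x) + B₂ * Real.sinh (2 * (c₂ - x))
        + B₃ * Real.sinh (2 * (c₃ - x))) x := by
  have haff2 : HasDerivAt (fun d : ℝ => c₂ - d) (-1) x := by
    simpa using (hasDerivAt_id x).const_sub c₂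
  have haff3 : HasDerivAt (fun d : ℝ => c₃ - d) (-1) x := by
    simpa using (hasDerivAt_id x).const_sub c₃
  have h1 := hdG B₁ x
  have h2 := (hdG B₂ (c₂ - x)).comp x haff2
  have h3 := (hdG B₃ (c₃ - x)).comp x haff3
  have heq : B₁ * Real.sinh (2 * x) + B₂ * Real.sinh (2 * (c₂ - x))
      + B₃ * Real.sinh (2 * (c₃ - x))
      = B₁ * Real.sinh (2 * x) - B₂ * Real.sinh (2 * (c₂ - x)) * (-1)
      - B₃ * Real.sinh (2 * (c₃ - x)) * (-1) := by ring
  rw [heq]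
  exact (h1.sub h2).sub h3

/-- Case IV of the main theorem (three boundary components): the total peripheral volume
`V` has a local maximum at `d₁⁰` iff the strict triangular inequalities
`vt₂⁰ − vt₃⁰ < vt₁⁰ < vt₂⁰ + vt₃⁰` hold. -/
theorem caseIV_localMax_iff_triangular (A₁ A₂ A₃ d₁ d₂ d₃ vt₁ vt₂ vt₃ : ℝ)
    (hA₁ : 0 < A₁) (hA₂ : 0 < A₂) (hA₃ : 0 < A₃)
    (hd₁ : 0 < d₁) (hd₂ : 0 < d₂) (hd₃ : 0 < d₃)
    (f₁ f₂ f₃ : ℝ → ℝ)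
    (hf₁ : ∀ t, f₁ t = A₁ / 4 * (2 * t + Real.sinh (2 * t)))
    (hf₂ : ∀ t, f₂ t = A₂ / 4 * (2 * t + Real.sinh (2 * t)))
    (hf₃ : ∀ t, f₃ t = A₃ / 4 * (2 * t + Real.sinh (2 * t)))
    (hvt₁ : vt₁ = A₁ / 4 * (1 + Real.cosh (2 * d₁)))
    (hvt₂ : vt₂ = A₂ / 4 * (1 + Real.cosh (2 * d₂)))
    (hvt₃ : vt₃ = A₃ / 4 * (1 + Real.cosh (2 * d₃)))
    (hord : vt₃ ≤ vt₂)
    (V : ℝ → ℝ)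
    (hVle : ∀ d ≤ d₁, V d = f₁ d + f₂ (d₂ + d₁ - d) + f₃ (d₃ - d₁ + d))
    (hVge : ∀ d ≥ d₁, V d = f₁ d + f₂ (d₂ + d₁ - d) + f₃ (d₃ + d₁ - d)) :
    IsLocalMax V d₁ ↔ (vt₂ - vt₃ < vt₁ ∧ vt₁ < vt₂ + vt₃) := by
  -- the two smooth branches
  set gL : ℝ → ℝ := fun d => A₁ / 4 * (2 * d + Real.sinh (2 * d))
      + A₂ / 4 * (2 * (d₂ + d₁ - d) + Real.sinh (2 * (d₂ + d₁ - d)))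
      + A₃ / 4 * (2 * (d₃ - d₁ + d) + Real.sinh (2 * (d₃ - d₁ + d))) with hgLdef
  set gR : ℝ → ℝ := fun d => A₁ / 4 * (2 * d + Real.sinh (2 * d))
      + A₂ / 4 * (2 * (d₂ + d₁ - d) + Real.sinh (2 * (d₂ + d₁ - d)))
      + A₃ / 4 * (2 * (d₃ + d₁ - d) + Real.sinh (2 * (d₃ + d₁ - d))) with hgRdef
  -- their (first) derivatives
  set LL : ℝ → ℝ := fun x => A₁ / 2 * (1 + Real.cosh (2 * x))
      - A₂ / 2 * (1 + Real.cosh (2 * (d₂ + d₁ - x)))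
      + A₃ / 2 * (1 + Real.cosh (2 * (d₃ - d₁ + x))) with hLLdef
  set LR : ℝ → ℝ := fun x => A₁ / 2 * (1 + Real.cosh (2 * x))
      - A₂ / 2 * (1 + Real.cosh (2 * (d₂ + d₁ - x)))
      - A₃ / 2 * (1 + Real.cosh (2 * (d₃ + d₁ - x))) with hLRdef
  have hVgL : ∀ d ≤ d₁, V d = gL d := by
    intro d hd
    rw [hVle d hd, hf₁, hf₂, hf₃, hgLdef]
  have hVgR : ∀ d ≥ d₁, V d = gR d := by
    intro d hd
    rw [hVge d hd, hf₁, hf₂, hf₃, hgRdef]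
  have hgL' : ∀ x, HasDerivAt gL (LL x) x := fun x =>
    hdBranchL A₁ A₂ A₃ (d₂ + d₁) (d₃ - d₁) x
  have hgR' : ∀ x, HasDerivAt gR (LR x) x := fun x =>
    hdBranchR A₁ A₂ A₃ (d₂ + d₁) (d₃ + d₁) x
  have hLL' : ∀ x, HasDerivAt LL (A₁ * Real.sinh (2 * x)
      + A₂ * Real.sinh (2 * (d₂ + d₁ - x)) + A₃ * Real.sinh (2 * (d₃ - d₁ + x))) x := fun x =>
    hdLBranchL A₁ A₂ A₃ (d₂ + d₁) (d₃ - d₁) x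
  have hLR' : ∀ x, HasDerivAt LR (A₁ * Real.sinh (2 * x)
      + A₂ * Real.sinh (2 * (d₂ + d₁ - x)) + A₃ * Real.sinh (2 * (d₃ + d₁ - x))) x := fun x =>
    hdLBranchR A₁ A₂ A₃ (d₂ + d₁) (d₃ + d₁) x
  have hLLval : LL d₁ = 2 * vt₁ - 2 * vt₂ + 2 * vt₃ := by
    simp only [hLLdef]
    rw [show d₂ + d₁ - d₁ = d₂ by ring, show d₃ - d₁ + d₁ = d₃ by ring,
      hvt₁, hvt₂, hvt₃]
    ring
  have hLRval : LR d₁ = 2 * vt₁ - 2 * vt₂ - 2 * vt₃ := by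
    simp only [hLRdef]
    rw [show d₂ + d₁ - d₁ = d₂ by ring, show d₃ + d₁ - d₁ = d₃ by ring,
      hvt₁, hvt₂, hvt₃]
    ring
  constructor
  · -- local max → triangular inequalities
    intro hmax
    rcases Metric.eventually_nhds_iff.1 hmax with ⟨ε, hε, hball⟩
    set δ : ℝ := min d₁ (min d₂ d₃) with hδdef
    have hδpos : 0 < δ := lt_min hd₁ (lt_min hd₂ hd₃)
    have hδ1 : δ ≤ d₁ := min_le_left _ _
    have hδ2 : δ ≤ d₂ := le_trans (min_le_right _ _) (min_le_left _ _)
    have hδ3 : δ ≤ d₃ := le_trans (min_le_right _ _) (min_le_right _ _)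
    constructor
    · by_contra h1
      push_neg at h1
      have hLd₁ : LL d₁ ≤ 0 := by rw [hLLval]; linarith
      -- LL is strictly increasing near d₁ from the left
      have hLLmono : StrictMonoOn LL (Icc (d₁ - δ) d₁) := by
        apply strictMonoOn_of_deriv_pos (convex_Icc _ _)
          (fun x _ => (hLL' x).continuousAt.continuousWithinAt)
        intro x hx
        rw [interior_Icc] at hx
        rw [(hLL' x).deriv]
        have p1 : 0 < Real.sinh (2 * x) := Real.sinh_pos_iff.2 (by linarith [hx.1])
        have p2 : 0 < Real.sinh (2 * (d₂ + d₁ - x)) := Real.sinh_pos_iff.2 (by linarith [hx.2])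
        have p3 : 0 < Real.sinh (2 * (d₃ - d₁ + x)) := Real.sinh_pos_iff.2 (by linarith [hx.1])
        positivity
      have hLLneg : ∀ x ∈ Ico (d₁ - δ) d₁, LL x < 0 := fun x hx =>
        lt_of_lt_of_le (hLLmono ⟨hx.1, hx.2.le⟩ ⟨by linarith [hδpos], le_rfl⟩ hx.2) hLd₁
      have hanti : StrictAntiOn gL (Icc (d₁ - δ) d₁) := by
        apply strictAntiOn_of_deriv_neg (convex_Icc _ _)
          (fun x _ => (hgL' x).continuousAt.continuousWithinAt)
        intro x hx
        rw [interior_Icc] at hx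
        rw [(hgL' x).deriv]
        exact hLLneg x ⟨hx.1.le, hx.2⟩
      set m : ℝ := min δ ε with hmdef
      have hmpos : 0 < m := lt_min hδpos hε
      set x : ℝ := d₁ - m / 2 with hxdef
      have hx1 : d₁ - δ ≤ x := by
        have := min_le_left δ ε; simp only [hxdef]; linarith
      have hx2 : x < d₁ := by simp only [hxdef]; linarith
      have hdist : dist x d₁ < ε := by
        have := min_le_right δ ε
        rw [Real.dist_eq, abs_lt]
        constructor <;> simp only [hxdef] <;> linarith
      have hVx := hball hdist
      rw [hVgL x hx2.le, hVgL d₁ le_rfl] at hVx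
      have := hanti ⟨hx1, hx2.le⟩ ⟨by linarith [hδpos], le_rfl⟩ hx2
      linarith
    · by_contra h2
      push_neg at h2
      have hLd₁ : 0 ≤ LR d₁ := by rw [hLRval]; linarith
      have hLRmono : StrictMonoOn LR (Icc d₁ (d₁ + δ)) := by
        apply strictMonoOn_of_deriv_pos (convex_Icc _ _)
          (fun x _ => (hLR' x).continuousAt.continuousWithinAt)
        intro x hx
        rw [interior_Icc] at hx
        rw [(hLR' x).deriv]
        have p1 : 0 < Real.sinh (2 * x) := Real.sinh_pos_iff.2 (by linarith [hx.1])
        have p2 : 0 < Real.sinh (2 * (d₂ + d₁ - x)) := Real.sinh_pos_iff.2 (by linarith [hx.2])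
        have p3 : 0 < Real.sinh (2 * (d₃ + d₁ - x)) := Real.sinh_pos_iff.2 (by linarith [hx.2])
        positivity
      have hLRpos : ∀ x ∈ Ioc d₁ (d₁ + δ), 0 < LR x := fun x hx =>
        lt_of_le_of_lt hLd₁ (hLRmono ⟨le_rfl, by linarith [hδpos]⟩ ⟨hx.1.le, hx.2⟩ hx.1)
      have hmono : StrictMonoOn gR (Icc d₁ (d₁ + δ)) := by
        apply strictMonoOn_of_deriv_pos (convex_Icc _ _)
          (fun x _ => (hgR' x).continuousAt.continuousWithinAt)
        intro x hx
        rw [interior_Icc] at hx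
        rw [(hgR' x).deriv]
        exact hLRpos x ⟨hx.1, hx.2.le⟩
      set m : ℝ := min δ ε with hmdef
      have hmpos : 0 < m := lt_min hδpos hε
      set x : ℝ := d₁ + m / 2 with hxdef
      have hx1 : x ≤ d₁ + δ := by
        have := min_le_left δ ε; simp only [hxdef]; linarith
      have hx2 : d₁ < x := by simp only [hxdef]; linarith
      have hdist : dist x d₁ < ε := by
        have := min_le_right δ ε
        rw [Real.dist_eq, abs_lt]
        constructor <;> simp only [hxdef] <;> linarith
      have hVx := hball hdist
      rw [hVgR x hx2.le, hVgR d₁ le_rfl] at hVx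
      have := hmono ⟨le_rfl, by linarith [hδpos]⟩ ⟨hx2.le, hx1⟩ hx2
      linarith
  · -- triangular inequalities → local max
    rintro ⟨h1, h2⟩
    have hLpos : 0 < LL d₁ := by rw [hLLval]; linarith
    have hRneg : LR d₁ < 0 := by rw [hLRval]; linarith
    have hevL : ∀ᶠ y in nhds d₁, 0 < LL y :=
      (hLL' d₁).continuousAt.eventually (eventually_gt_nhds hLpos)
    have hevR : ∀ᶠ y in nhds d₁, LR y < 0 :=
      (hLR' d₁).continuousAt.eventually (eventually_lt_nhds hRneg)
    rcases Metric.eventually_nhds_iff.1 hevL with ⟨εL, hεL, hL⟩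
    rcases Metric.eventually_nhds_iff.1 hevR with ⟨εR, hεR, hR⟩
    have hmonoL : StrictMonoOn gL (Icc (d₁ - εL) d₁) := by
      apply strictMonoOn_of_deriv_pos (convex_Icc _ _)
        (fun x _ => (hgL' x).continuousAt.continuousWithinAt)
      intro x hx
      rw [interior_Icc] at hx
      rw [(hgL' x).deriv]
      exact hL (by rw [Real.dist_eq, abs_lt]; constructor <;> linarith [hx.1, hx.2])
    have hantiR : StrictAntiOn gR (Icc d₁ (d₁ + εR)) := by
      apply strictAntiOn_of_deriv_neg (convex_Icc _ _)
        (fun x _ => (hgR' x).continuousAt.continuousWithinAt)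
      intro x hx
      rw [interior_Icc] at hx
      rw [(hgR' x).deriv]
      exact hR (by rw [Real.dist_eq, abs_lt]; constructor <;> linarith [hx.1, hx.2])
    show ∀ᶠ y in nhds d₁, V y ≤ V d₁
    refine Metric.eventually_nhds_iff.2 ⟨min εL εR, lt_min hεL hεR, fun {y} hy => ?_⟩
    rw [Real.dist_eq, abs_lt] at hy
    have hm1 := min_le_left εL εR
    have hm2 := min_le_right εL εR
    obtain ⟨hy1, hy2⟩ := hy
    rcases le_total y d₁ with hc | hc
    · rw [hVgL y hc, hVgL d₁ le_rfl]
      exact hmonoL.monotoneOn ⟨by linarith, hc⟩ ⟨by linarith [hεL], le_rfl⟩ hc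
    · rw [hVgR y hc, hVgR d₁ le_rfl]
      exact hantiR.antitoneOn ⟨le_rfl, by linarith [hεR]⟩ ⟨hc, by linarith⟩ hc
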